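/- For every 0 ≤ s ≤ q_1−1, the r×r matrix with (i,j)-entry ∂ψ_{sr+i}/∂b_{r-1-j} equals −(s+1) times the product of the r×n matrix with (i,j)-entry ∂ψ_{sr+i}/∂a_{n-1-j} with the matrix D (indices 0-based). -/

import Mathlib

open MvPolynomial Matrix

noncomputable section

namespace TB

/-- The polynomial ring `ℂ[a_0,…,a_{n-1},b_0,…,b_{r-1}]`: variable `Sum.inl i` is `a_i`
and `Sum.inr j` is `b_j`. -/
abbrev R (n r : ℕ) : Type := MvPolynomial (Fin n ⊕ Fin r) ℂ

/-- The power series `1 + (cf 1)·t + ⋯ + (cf m)·t^m`. -/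
def ser {A : Type*} [CommRing A] (m : ℕ) (cf : ℕ → A) : PowerSeries A :=
  PowerSeries.mk fun k => if k = 0 then 1 else if k ≤ m then cf k else 0

/-- `1 + a_{n-1} t + ⋯ + a_0 t^n`. -/
def Aser (n r : ℕ) : PowerSeries (R n r) :=
  ser n fun k => if h : 1 ≤ k ∧ k ≤ n then X (Sum.inl ⟨n - k, by omega⟩) else 0

/-- `1 + b_{r-1} t + ⋯ + b_0 t^r`. -/
def Bser (n r : ℕ) : PowerSeries (R n r) :=
  ser r fun k => if h : 1 ≤ k ∧ k ≤ r then X (Sum.inr ⟨r - k, by omega⟩) else 0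

/-- `1 + d_{n-1} t + ⋯ + d_0 t^n`. -/
def Dser (n r : ℕ) (d : Fin n → R n r) : PowerSeries (R n r) :=
  ser n fun k => if h : 1 ≤ k ∧ k ≤ n then d ⟨n - k, by omega⟩ else 0

/-- `1 + d_{n-1} t + ⋯ + d_1 t^{n-1}`. -/
def Dhatser (n r : ℕ) (d : Fin n → R n r) : PowerSeries (R n r) :=
  ser (n - 1) fun k => if h : 1 ≤ k ∧ k ≤ n - 1 then d ⟨n - k, by omega⟩ else 0

/-- `f(x) = x^n + a_{n-1}x^{n-1} + ⋯ + a_0`. -/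
def fpoly (n r : ℕ) : Polynomial (R n r) :=
  Polynomial.X ^ n + ∑ i : Fin n, Polynomial.C (X (Sum.inl i)) * Polynomial.X ^ (i : ℕ)

/-- `g(x) = x^r + b_{r-1}x^{r-1} + ⋯ + b_0`. -/
def gpoly (n r : ℕ) : Polynomial (R n r) :=
  Polynomial.X ^ r + ∑ j : Fin r, Polynomial.C (X (Sum.inr j)) * Polynomial.X ^ (j : ℕ)

/-- The coefficient `c_k` of `f·g`, for `0 ≤ k ≤ n+r-1`. -/
def cc (n r : ℕ) (k : Fin (n + r)) : R n r := (fpoly n r * gpoly n r).coeff (k : ℕ)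

/-- `d_0, …, d_{n-1}` are the unique polynomials with
`(1 + b_{r-1}t + ⋯ + b_0 t^r)(1 + d_{n-1}t + ⋯ + d_0 t^n) ≡ 1 + a_{n-1}t + ⋯ + a_0 t^n (mod t^{n+1})`. -/
def dSpec (n r : ℕ) (d : Fin n → R n r) : Prop :=
  ∀ k ≤ n, PowerSeries.coeff k (Bser n r * Dser n r d)
    = PowerSeries.coeff k (Aser n r)

/-- `ψ_i = d_i` for `0 ≤ i ≤ r-1`, and
`ψ_{s·r+i} = ∂^s d_{r-1} / (∂b_0^{s-1} ∂b_{r-1-i})` for `s ≥ 1`, `0 ≤ i ≤ r-1`. -/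
def psi (n r : ℕ) (hr : 0 < r) (hrn : r ≤ n) (d : Fin n → R n r) (m : ℕ) : R n r :=
  if h : m < r then d ⟨m, by omega⟩
  else
    (fun q => pderiv (Sum.inr (⟨0, hr⟩ : Fin r)) q)^[m / r - 1]
      (pderiv (Sum.inr (⟨r - 1 - m % r, by omega⟩ : Fin r)) (d ⟨r - 1, by omega⟩))

/-- The `m×m` lower shift matrix over `R n r`. -/
def Lmat (n r m : ℕ) : Matrix (Fin m) (Fin m) (R n r) :=
  Matrix.of fun i j => if (i : ℕ) = (j : ℕ) + 1 then 1 else 0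

/-- `B = I_n + b_{r-1}L_n + ⋯ + b_0 L_n^r`. -/
def Bmat (n r : ℕ) (hr : 0 < r) : Matrix (Fin n) (Fin n) (R n r) :=
  1 + ∑ k ∈ Finset.range r, (X (Sum.inr (⟨r - 1 - k, by omega⟩ : Fin r)) : R n r) • Lmat n r n ^ (k + 1)

/-- `D̂ = I_n + d_{n-1}L_n + ⋯ + d_1 L_n^{n-1}`. -/
def Dhat (n r : ℕ) (hn : 0 < n) (d : Fin n → R n r) : Matrix (Fin n) (Fin n) (R n r) :=
  1 + ∑ k ∈ Finset.range (n - 1), d ⟨n - 1 - k, by omega⟩ • Lmat n r n ^ (k + 1)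

/-- `D`: the first `r` columns of `D̂`. -/
def Dmat (n r : ℕ) (hn : 0 < n) (hrn : r ≤ n) (d : Fin n → R n r) :
    Matrix (Fin n) (Fin r) (R n r) :=
  (Dhat n r hn d).submatrix id (Fin.castLE hrn)

/-- `Â = I_n + a_{n-1}L_n + ⋯ + a_1 L_n^{n-1}`. -/
def Ahat (n r : ℕ) (hn : 0 < n) : Matrix (Fin n) (Fin n) (R n r) :=
  1 + ∑ k ∈ Finset.range (n - 1),
    (X (Sum.inl (⟨n - 1 - k, by omega⟩ : Fin n)) : R n r) • Lmat n r n ^ (k + 1)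

/-- `A`: the first `r` columns of `Â`. -/
def Amat (n r : ℕ) (hn : 0 < n) (hrn : r ≤ n) : Matrix (Fin n) (Fin r) (R n r) :=
  (Ahat n r hn).submatrix id (Fin.castLE hrn)

/-- The Jacobian matrix of a family `p` of elements of `R n r`: the row of index `i` is
`(∂p_i/∂a_{n-1}, …, ∂p_i/∂a_0, ∂p_i/∂b_{r-1}, …, ∂p_i/∂b_0)`. -/
def jac {n r : ℕ} {ι : Type*} (p : ι → R n r) : Matrix ι (Fin (n + r)) (R n r) :=
  Matrix.of fun i j =>
    if h : (j : ℕ) < n then pderiv (Sum.inl (⟨n - 1 - (j : ℕ), by omega⟩ : Fin n)) (p i)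
    else
      pderiv (Sum.inr (⟨r - 1 - ((j : ℕ) - n), by have := j.isLt; omega⟩ : Fin r)) (p i)

/-- The set of all `k×k` minors of a matrix. -/
def minorsSet {n r : ℕ} {ι : Type*} (k : ℕ) (M : Matrix ι (Fin (n + r)) (R n r)) :
    Set (R n r) :=
  { x | ∃ (ri : Fin k → ι) (ci : Fin k → Fin (n + r)), x = (M.submatrix ri ci).det }

/-- Evaluation at the origin `a_i = b_j = 0`. -/
def ev0 (n r : ℕ) : R n r →+* ℂ := eval fun _ => 0

/-- The maximal ideal `(a_0,…,a_{n-1},b_0,…,b_{r-1})`. -/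
def mIdeal (n r : ℕ) : Ideal (R n r) :=
  Ideal.span (Set.range (X : (Fin n ⊕ Fin r) → R n r))

/-- `1 + g_1 t + ⋯ + g_{r_1} t^{r_1}` over `S = ℂ[g_1,…,g_{r_1},b_0,…,b_{r-1}] = R r1 r`,
where `g_k` is the variable `Sum.inl ⟨k-1⟩`. -/
def Gser (r1 r : ℕ) : PowerSeries (R r1 r) :=
  ser r1 fun k => if h : 1 ≤ k ∧ k ≤ r1 then X (Sum.inl ⟨k - 1, by omega⟩) else 0

/-- `1 + w_{r-1} t + ⋯ + w_0 t^r`. -/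
def Wser (r1 r : ℕ) (w : Fin r → R r1 r) : PowerSeries (R r1 r) :=
  ser r fun k => if h : 1 ≤ k ∧ k ≤ r then w ⟨r - k, by omega⟩ else 0

/-- `1 + w_{r-1} t + ⋯ + w_1 t^{r-1}`. -/
def Whatser (r1 r : ℕ) (w : Fin r → R r1 r) : PowerSeries (R r1 r) :=
  ser (r - 1) fun k => if h : 1 ≤ k ∧ k ≤ r - 1 then w ⟨r - k, by omega⟩ else 0

/-- `w_0,…,w_{r-1}` are the unique polynomials with
`(1 + g_1 t + ⋯ + g_{r_1}t^{r_1})(1 + w_{r-1}t + ⋯ + w_0 t^r) ≡ 1 + b_{r-1}t + ⋯ + b_0 t^r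
(mod t^{r+1})`. -/
def wSpec (r1 r : ℕ) (w : Fin r → R r1 r) : Prop :=
  ∀ k ≤ r, PowerSeries.coeff k (Gser r1 r * Wser r1 r w)
    = PowerSeries.coeff k (Bser r1 r)

/-- `φ'_i = w_i` for `0 ≤ i ≤ r_1-1`, and
`φ'_{s·r_1+i} = ∂^s w_{r_1-1} / (∂g_{r_1}^{s-1} ∂g_{1+i})` for `s ≥ 1`, `0 ≤ i ≤ r_1-1`. -/
def phi' (r1 r : ℕ) (h1 : 0 < r1) (h2 : r1 < r) (w : Fin r → R r1 r) (m : ℕ) : R r1 r :=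
  if h : m < r1 then w ⟨m, by omega⟩
  else
    (fun q => pderiv (Sum.inl (⟨r1 - 1, by omega⟩ : Fin r1)) q)^[m / r1 - 1]
      (pderiv (Sum.inl (⟨m % r1, Nat.mod_lt m h1⟩ : Fin r1)) (w ⟨r1 - 1, by omega⟩))

/-- The substitution `g_k ↦ γ_{n-k}`, `b_j ↦ b_j`, from `S = R r1 r` to `R n r`. -/
def subst (n r r1 : ℕ) (γ : ℕ → R n r) : R r1 r →ₐ[ℂ] R n r :=
  aeval (Sum.elim (fun i : Fin r1 => γ (n - ((i : ℕ) + 1))) fun j : Fin r => X (Sum.inr j))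


/-- From `n = q_1·r + r_1` with `q_1 ≥ 1` we get `r ≤ n`. -/
theorem rle (q1 r r1 n : ℕ) (hq1 : 1 ≤ q1) (hn : n = q1 * r + r1) : r ≤ n := by
  have := Nat.le_mul_of_pos_left r hq1
  omega


/-! ### Auxiliary development for stmt6 -/

section Aux

variable {n r : ℕ}

/-- Inverse power series of `Bser`. -/
def eB (n r : ℕ) : PowerSeries (R n r) := PowerSeries.invOfUnit (Bser n r) 1

lemma coeff_ser {A : Type*} [CommRing A] (m k : ℕ) (cf : ℕ → A) :
    PowerSeries.coeff (R := A) k (ser m cf) = if k = 0 then 1 else if k ≤ m then cf k else 0 :=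
  PowerSeries.coeff_mk _ _

lemma constantCoeff_Bser : PowerSeries.constantCoeff (R := R n r) (Bser n r) = 1 := by
  rw [← PowerSeries.coeff_zero_eq_constantCoeff_apply, Bser, coeff_ser]
  simp

lemma B_mul_e : Bser n r * eB n r = 1 :=
  PowerSeries.mul_invOfUnit _ _ (by rw [constantCoeff_Bser]; rfl)

/-- Coefficient-wise partial derivative of a power series. -/
def Ds (n r : ℕ) (v : Fin n ⊕ Fin r) (F : PowerSeries (R n r)) : PowerSeries (R n r) :=
  PowerSeries.mk fun k => pderiv v (PowerSeries.coeff k F)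

lemma coeff_Ds (v : Fin n ⊕ Fin r) (k : ℕ) (F : PowerSeries (R n r)) :
    PowerSeries.coeff k (Ds n r v F) = pderiv v (PowerSeries.coeff k F) :=
  PowerSeries.coeff_mk _ _

lemma Ds_mul (v : Fin n ⊕ Fin r) (F G : PowerSeries (R n r)) :
    Ds n r v (F * G) = Ds n r v F * G + F * Ds n r v G := by
  refine PowerSeries.ext fun k => ?_
  rw [coeff_Ds, PowerSeries.coeff_mul, map_sum (pderiv v), map_add, PowerSeries.coeff_mul,
    PowerSeries.coeff_mul, ← Finset.sum_add_distrib]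
  refine Finset.sum_congr rfl fun p _ => ?_
  rw [pderiv_mul, coeff_Ds, coeff_Ds]

lemma Ds_one (v : Fin n ⊕ Fin r) : Ds n r v 1 = 0 := by
  refine PowerSeries.ext fun k => ?_
  simp only [coeff_Ds, PowerSeries.coeff_one, map_zero]
  split <;> simp

lemma Ds_X_pow (v : Fin n ⊕ Fin r) (p : ℕ) :
    Ds n r v (PowerSeries.X ^ p) = 0 := by
  refine PowerSeries.ext fun k => ?_
  simp only [coeff_Ds, PowerSeries.coeff_X_pow, map_zero]
  split <;> simp

lemma Ds_pow (v : Fin n ⊕ Fin r) (F : PowerSeries (R n r)) (k : ℕ) :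
    Ds n r v (F ^ (k + 1)) = ((k + 1 : ℕ) : PowerSeries (R n r)) * (F ^ k * Ds n r v F) := by
  induction k with
  | zero => simp [Ds_mul]
  | succ k ih =>
    rw [pow_succ, Ds_mul, ih]
    push_cast
    ring

end Aux
section Aux2

variable {n r : ℕ}

lemma Ds_Bser_b (w : Fin r) :
    Ds n r (Sum.inr w) (Bser n r) = PowerSeries.X ^ (r - (w : ℕ)) := by
  refine PowerSeries.ext fun k => ?_
  rw [coeff_Ds, PowerSeries.coeff_X_pow, Bser, coeff_ser]
  rcases Nat.eq_zero_or_pos k with hk | hk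
  · subst hk
    have : ¬ (0 = r - (w : ℕ)) := by have := w.isLt; omega
    simp [this]
  by_cases hkr : k ≤ r
  · rw [if_neg (by omega), if_pos hkr, dif_pos ⟨hk, hkr⟩]
    by_cases he : k = r - (w : ℕ)
    · have hw : Sum.inr (α := Fin n) (⟨r - k, by omega⟩ : Fin r) = Sum.inr w := by
        have := w.isLt
        simp only [Sum.inr.injEq, Fin.ext_iff]
        omega
      rw [hw, if_pos he, pderiv_X_self]
    · have hw : Sum.inr (α := Fin n) (⟨r - k, by omega⟩ : Fin r) ≠ Sum.inr w := by
        have := w.isLt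
        simp only [ne_eq, Sum.inr.injEq, Fin.ext_iff]
        omega
      rw [if_neg he, pderiv_X_of_ne hw]
  · rw [if_neg (by omega), if_neg hkr, if_neg (by have := w.isLt; omega), map_zero]

lemma Ds_Aser_a (w : Fin n) :
    Ds n r (Sum.inl w) (Aser n r) = PowerSeries.X ^ (n - (w : ℕ)) := by
  refine PowerSeries.ext fun k => ?_
  rw [coeff_Ds, PowerSeries.coeff_X_pow, Aser, coeff_ser]
  rcases Nat.eq_zero_or_pos k with hk | hk
  · subst hk
    have : ¬ (0 = n - (w : ℕ)) := by have := w.isLt; omega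
    simp [this]
  by_cases hkr : k ≤ n
  · rw [if_neg (by omega), if_pos hkr, dif_pos ⟨hk, hkr⟩]
    by_cases he : k = n - (w : ℕ)
    · have hw : Sum.inl (β := Fin r) (⟨n - k, by omega⟩ : Fin n) = Sum.inl w := by
        have := w.isLt
        simp only [Sum.inl.injEq, Fin.ext_iff]
        omega
      rw [hw, if_pos he, pderiv_X_self]
    · have hw : Sum.inl (β := Fin r) (⟨n - k, by omega⟩ : Fin n) ≠ Sum.inl w := by
        have := w.isLt
        simp only [ne_eq, Sum.inl.injEq, Fin.ext_iff]
        omega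
      rw [if_neg he, pderiv_X_of_ne hw]
  · rw [if_neg (by omega), if_neg hkr, if_neg (by have := w.isLt; omega), map_zero]

lemma Ds_Aser_b (w : Fin r) : Ds n r (Sum.inr w) (Aser n r) = 0 := by
  refine PowerSeries.ext fun k => ?_
  rw [coeff_Ds, Aser, coeff_ser]
  rcases Nat.eq_zero_or_pos k with hk | hk
  · subst hk; simp
  by_cases hkr : k ≤ n
  · rw [if_neg (by omega), if_pos hkr, dif_pos ⟨hk, hkr⟩, pderiv_X_of_ne (by simp)]
    simp
  · rw [if_neg (by omega), if_neg hkr, map_zero]; simp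

lemma Ds_Bser_a (w : Fin n) : Ds n r (Sum.inl w) (Bser n r) = 0 := by
  refine PowerSeries.ext fun k => ?_
  rw [coeff_Ds, Bser, coeff_ser]
  rcases Nat.eq_zero_or_pos k with hk | hk
  · subst hk; simp
  by_cases hkr : k ≤ r
  · rw [if_neg (by omega), if_pos hkr, dif_pos ⟨hk, hkr⟩, pderiv_X_of_ne (by simp)]
    simp
  · rw [if_neg (by omega), if_neg hkr, map_zero]; simp

lemma Ds_e (v : Fin n ⊕ Fin r) :
    Ds n r v (eB n r) = -(Ds n r v (Bser n r)) * (eB n r) ^ 2 := by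
  have h2 : Ds n r v (Bser n r) * eB n r + Bser n r * Ds n r v (eB n r) = 0 := by
    rw [← Ds_mul, B_mul_e, Ds_one]
  linear_combination (eB n r) * h2 - (Ds n r v (eB n r)) * B_mul_e

end Aux2
section Aux3

variable {n r : ℕ}

lemma series_b (w : Fin r) (p k : ℕ) :
    Ds n r (Sum.inr w) (PowerSeries.X ^ p * Aser n r * (eB n r) ^ (k + 1))
      = PowerSeries.C (R := R n r) (-((k : R n r) + 1))
          * (PowerSeries.X ^ (p + (r - (w : ℕ))) * Aser n r * (eB n r) ^ (k + 2)) := by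
  rw [Ds_mul, Ds_mul, Ds_X_pow, Ds_Aser_b, Ds_pow, Ds_e, Ds_Bser_b]
  have hc : ((k + 1 : ℕ) : PowerSeries (R n r)) = PowerSeries.C (R := R n r) ((k : R n r) + 1) := by
    rw [show ((k : R n r) + 1) = ((k + 1 : ℕ) : R n r) by push_cast; ring]
    exact (map_natCast (PowerSeries.C (R := R n r)) (k+1)).symm
  rw [hc, pow_add, map_neg]
  ring

lemma series_a (w : Fin n) (p k : ℕ) :
    Ds n r (Sum.inl w) (PowerSeries.X ^ p * Aser n r * (eB n r) ^ (k + 1))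
      = PowerSeries.X ^ (p + (n - (w : ℕ))) * (eB n r) ^ (k + 1) := by
  rw [Ds_mul, Ds_mul, Ds_X_pow, Ds_Aser_a, Ds_pow, Ds_e, Ds_Bser_a, pow_add]
  ring

lemma Lb (w : Fin r) (p k m : ℕ) :
    pderiv (Sum.inr w) (PowerSeries.coeff (R := R n r) m
        (PowerSeries.X ^ p * Aser n r * (eB n r) ^ (k + 1)))
      = -((k : R n r) + 1) * PowerSeries.coeff (R := R n r) m
          (PowerSeries.X ^ (p + (r - (w : ℕ))) * Aser n r * (eB n r) ^ (k + 2)) := by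
  rw [← coeff_Ds, series_b, PowerSeries.coeff_C_mul]

lemma La (w : Fin n) (p k m : ℕ) :
    pderiv (Sum.inl w) (PowerSeries.coeff (R := R n r) m
        (PowerSeries.X ^ p * Aser n r * (eB n r) ^ (k + 1)))
      = PowerSeries.coeff (R := R n r) m
          (PowerSeries.X ^ (p + (n - (w : ℕ))) * (eB n r) ^ (k + 1)) := by
  rw [← coeff_Ds, series_a]

lemma coeff_mul_congr (N : ℕ) (H F G : PowerSeries (R n r))
    (h : ∀ k ≤ N, PowerSeries.coeff (R := R n r) k F = PowerSeries.coeff (R := R n r) k G) :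
    ∀ k ≤ N, PowerSeries.coeff (R := R n r) k (H * F) = PowerSeries.coeff (R := R n r) k (H * G) := by
  intro k hk
  rw [PowerSeries.coeff_mul, PowerSeries.coeff_mul]
  refine Finset.sum_congr rfl fun p hp => ?_
  rw [h p.2 (by have := Finset.HasAntidiagonal.mem_antidiagonal.mp hp; omega)]

lemma coeff_Dser (d : Fin n → R n r) (k : ℕ) :
    PowerSeries.coeff (R := R n r) k (Dser n r d)
      = if k = 0 then 1 else if h : 1 ≤ k ∧ k ≤ n then d ⟨n - k, by omega⟩ else 0 := by
  rw [Dser, coeff_ser]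
  by_cases hk0 : k = 0
  · simp [hk0]
  rw [if_neg hk0, if_neg hk0]
  by_cases hkn : k ≤ n
  · rw [if_pos hkn]
  · rw [if_neg hkn, dif_neg (by omega)]

lemma coeff_Dser_eq (d : Fin n → R n r) (hd : dSpec n r d) :
    ∀ k ≤ n, PowerSeries.coeff (R := R n r) k (Dser n r d)
      = PowerSeries.coeff (R := R n r) k (Aser n r * eB n r) := by
  intro k hk
  have h1 := coeff_mul_congr n (eB n r) _ _ hd k hk
  have h2 : eB n r * (Bser n r * Dser n r d) = Dser n r d := by
    rw [← mul_assoc, mul_comm (eB n r), B_mul_e, one_mul]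
  rw [h2] at h1
  rw [h1, mul_comm]

lemma d_eq (d : Fin n → R n r) (hd : dSpec n r d) (i : Fin n) :
    d i = PowerSeries.coeff (R := R n r) n
      (PowerSeries.X ^ (i : ℕ) * (Aser n r * eB n r)) := by
  have hi := i.isLt
  have hn' : n = (n - (i : ℕ)) + (i : ℕ) := by omega
  rw [show PowerSeries.coeff (R := R n r) n = PowerSeries.coeff (R := R n r) ((n - (i : ℕ)) + (i : ℕ)) by
      rw [← hn'],
    PowerSeries.coeff_X_pow_mul, ← coeff_Dser_eq d hd _ (by omega), coeff_Dser]
  rw [if_neg (by omega), dif_pos ⟨by omega, by omega⟩]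
  congr 1
  ext
  simp
  omega

end Aux3
section Aux4

variable {n r : ℕ}

/-- The constant `(-1)^s · s!`. -/
def cInt (s : ℕ) : ℤ := (-1) ^ s * s.factorial

lemma pderiv_intCast (v : Fin n ⊕ Fin r) (m : ℤ) :
    pderiv v ((m : ℤ) : R n r) = 0 := by
  rw [← map_intCast (C : ℂ →+* R n r) m, pderiv_C]

lemma pderiv_intCast_mul (v : Fin n ⊕ Fin r) (m : ℤ) (x : R n r) :
    pderiv v (((m : ℤ) : R n r) * x) = ((m : ℤ) : R n r) * pderiv v x := by
  rw [pderiv_mul, pderiv_intCast, zero_mul, zero_add]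

lemma cInt_succ (s : ℕ) : cInt (s + 1) = -(s + 1) * cInt s := by
  simp [cInt, pow_succ, Nat.factorial_succ]
  ring

lemma psi_aux (hr : 0 < r) (d : Fin n → R n r) (hd : dSpec n r d) (i : ℕ) (hi : i < r)
    (hrn : r ≤ n) (w : Fin r) (hw : (w : ℕ) = r - 1 - i) :
    ∀ s : ℕ, (fun q => pderiv (Sum.inr (⟨0, hr⟩ : Fin r)) q)^[s]
        (pderiv (Sum.inr w) (d ⟨r - 1, by omega⟩))
      = (cInt (s + 1) : R n r) * PowerSeries.coeff (R := R n r) n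
          (PowerSeries.X ^ ((s + 1) * r + i) * Aser n r * (eB n r) ^ (s + 2)) := by
  intro s
  induction s with
  | zero =>
    rw [Function.iterate_zero, id_eq]
    have hd1 : d ⟨r - 1, by omega⟩ = PowerSeries.coeff (R := R n r) n
        (PowerSeries.X ^ (r - 1) * Aser n r * (eB n r) ^ (0 + 1)) := by
      rw [pow_one, mul_assoc]
      exact d_eq d hd ⟨r - 1, by omega⟩
    rw [hd1, Lb]
    rw [show (r - 1) + (r - (w : ℕ)) = (0 + 1) * r + i by omega]
    have hc : (cInt (0 + 1) : R n r) = -((0 : ℕ) + 1 : R n r) := by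
      simp [cInt]
    rw [hc]
  | succ s ih =>
    rw [Function.iterate_succ_apply', ih, pderiv_intCast_mul, Lb]
    rw [show ((s + 1) * r + i) + (r - ((⟨0, hr⟩ : Fin r) : ℕ)) = (s + 1 + 1) * r + i by
      show (s + 1) * r + i + (r - 0) = (s + 1 + 1) * r + i
      rw [Nat.sub_zero]
      ring]
    have hc : (cInt (s + 1 + 1) : R n r) = (cInt (s + 1) : R n r) * -((s : R n r) + 1 + 1) := by
      rw [cInt_succ (s + 1)]
      push_cast
      ring
    rw [hc]
    push_cast
    ring

lemma psi_formula (hr : 0 < r) (hrn : r ≤ n) (d : Fin n → R n r) (hd : dSpec n r d)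
    (s i : ℕ) (hi : i < r) :
    psi n r hr hrn d (s * r + i)
      = (cInt s : R n r) * PowerSeries.coeff (R := R n r) n
          (PowerSeries.X ^ (s * r + i) * Aser n r * (eB n r) ^ (s + 1)) := by
  cases s with
  | zero =>
    rw [psi, dif_pos (by omega)]
    have hc : (cInt 0 : R n r) = 1 := by simp [cInt]
    rw [hc, one_mul, pow_one, mul_assoc]
    exact d_eq d hd ⟨0 * r + i, by omega⟩
  | succ s =>
    have hm : ¬ ((s + 1) * r + i < r) := by
      have : r ≤ (s + 1) * r := Nat.le_mul_of_pos_left r (by omega)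
      omega
    have hdiv : ((s + 1) * r + i) / r - 1 = s := by
      rw [Nat.add_comm ((s + 1) * r) i, Nat.add_mul_div_right _ _ hr, Nat.div_eq_of_lt hi]
      omega
    have hmod : ((s + 1) * r + i) % r = i := by
      rw [Nat.add_comm ((s + 1) * r) i, Nat.add_mul_mod_self_right, Nat.mod_eq_of_lt hi]
    rw [psi, dif_neg hm, hdiv]
    exact psi_aux hr d hd i hi hrn ⟨r - 1 - ((s + 1) * r + i) % r, by omega⟩
      (by show r - 1 - ((s + 1) * r + i) % r = r - 1 - i; rw [hmod]) s

end Aux4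
section Aux5

variable {n r : ℕ}

lemma Lpow (m : ℕ) (l j : Fin n) :
    ((Lmat n r n) ^ m) l j = if (l : ℕ) = (j : ℕ) + m then 1 else 0 := by
  induction m generalizing j with
  | zero =>
    rw [pow_zero, Matrix.one_apply]
    simp [Fin.ext_iff]
  | succ m ih =>
    rw [pow_succ, Matrix.mul_apply]
    by_cases h : (j : ℕ) + 1 < n
    · rw [Finset.sum_eq_single (⟨(j : ℕ) + 1, h⟩ : Fin n)]
      · rw [ih ⟨(j : ℕ) + 1, h⟩]
        have hiff : ((l : ℕ) = (j : ℕ) + 1 + m) ↔ ((l : ℕ) = (j : ℕ) + (m + 1)) := by omega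
        simp [Lmat, hiff]
      · intro c _ hc
        rw [Lmat]
        simp only [Matrix.of_apply]
        rw [if_neg (by simpa [Fin.ext_iff] using hc), mul_zero]
      · intro hcon
        exact absurd (Finset.mem_univ _) hcon
    · rw [Finset.sum_eq_zero, if_neg (by have := l.isLt; omega)]
      intro c _
      rw [Lmat]
      simp only [Matrix.of_apply]
      rw [if_neg (by have := c.isLt; omega), mul_zero]

lemma Dmat_apply (hn : 0 < n) (hrn : r ≤ n) (d : Fin n → R n r) (l : Fin n) (j : Fin r) :
    Dmat n r hn hrn d l j
      = if (j : ℕ) ≤ (l : ℕ)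
          then PowerSeries.coeff (R := R n r) ((l : ℕ) - (j : ℕ)) (Dser n r d)
          else 0 := by
  rw [Dmat, Matrix.submatrix_apply, id_eq, Dhat, Matrix.add_apply, Matrix.sum_apply]
  have hj : ((Fin.castLE hrn j : Fin n) : ℕ) = (j : ℕ) := rfl
  simp only [Matrix.smul_apply, smul_eq_mul]
  by_cases hjl : (j : ℕ) < (l : ℕ)
  · have hmem : (l : ℕ) - (j : ℕ) - 1 ∈ Finset.range (n - 1) := by
      have := l.isLt
      exact Finset.mem_range.mpr (by omega)
    rw [Finset.sum_eq_single_of_mem _ hmem]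
    · rw [Lpow, if_pos (by have := l.isLt; omega), mul_one, Matrix.one_apply,
        if_neg (by simp [Fin.ext_iff]; omega), zero_add]
      rw [if_pos (by omega), coeff_Dser, if_neg (by omega),
        dif_pos ⟨by omega, by have := l.isLt; omega⟩]
      congr 1
      simp only [Fin.ext_iff]
      omega
    · intro k _ hk
      rw [Lpow, if_neg (by omega), mul_zero]
  · rw [Finset.sum_eq_zero]
    · rw [add_zero, Matrix.one_apply]
      by_cases he : (l : ℕ) = (j : ℕ)
      · rw [if_pos (by simp [Fin.ext_iff]; omega), if_pos (by omega), coeff_Dser,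
          if_pos (by omega)]
      · rw [if_neg (by simp [Fin.ext_iff]; omega), if_neg (by omega)]
    · intro k _
      rw [Lpow, if_neg (by omega), mul_zero]

end Aux5
section Aux6

variable {n r : ℕ}

lemma key_sum (hn : 0 < n) (hrn : r ≤ n) (d : Fin n → R n r) (hd : dSpec n r d)
    (s P : ℕ) (j : Fin r) :
    PowerSeries.coeff (R := R n r) n
        (PowerSeries.X ^ (P + ((j : ℕ) + 1)) * Aser n r * (eB n r) ^ (s + 2))
      = ∑ l : Fin n, PowerSeries.coeff (R := R n r) n
          (PowerSeries.X ^ (P + ((l : ℕ) + 1)) * (eB n r) ^ (s + 1)) * Dmat n r hn hrn d l j := by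
  rw [show P + ((j : ℕ) + 1) = P + (j : ℕ) + 1 from by omega]
  have hexp : ∀ l : Fin n, P + ((l : ℕ) + 1) = P + (l : ℕ) + 1 := fun l => by omega
  simp only [hexp]
  set F : PowerSeries (R n r) := (eB n r) ^ (s + 1) with hF
  set G : PowerSeries (R n r) := PowerSeries.X ^ (P + (j : ℕ) + 1) * F with hG
  set N : ℕ → R n r := fun l =>
    if (j : ℕ) ≤ l
      then PowerSeries.coeff (R := R n r) n (PowerSeries.X ^ (P + l + 1) * F)
        * PowerSeries.coeff (R := R n r) (l - (j : ℕ)) (Dser n r d)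
      else 0 with hN
  have stepA : ∑ l : Fin n, PowerSeries.coeff (R := R n r) n
        (PowerSeries.X ^ (P + (l : ℕ) + 1) * F) * Dmat n r hn hrn d l j
      = ∑ l ∈ Finset.range n, N l := by
    rw [← Fin.sum_univ_eq_sum_range N n]
    refine Finset.sum_congr rfl fun l _ => ?_
    rw [Dmat_apply]
    simp only [hN]
    by_cases hjl : (j : ℕ) ≤ (l : ℕ)
    · rw [if_pos hjl, if_pos hjl]
    · rw [if_neg hjl, if_neg hjl, mul_zero]
  have stepB : ∑ l ∈ Finset.range n, N l = ∑ l ∈ Finset.range ((j : ℕ) + (n + 1)), N l := by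
    refine Finset.sum_subset (by intro x hx; simp only [Finset.mem_range] at *; omega) ?_
    intro x _ hx
    simp only [Finset.mem_range, not_lt] at hx
    simp only [hN]
    split
    · rw [PowerSeries.coeff_X_pow_mul', if_neg (by omega), zero_mul]
    · rfl
  have stepC : ∑ l ∈ Finset.range ((j : ℕ) + (n + 1)), N l
      = ∑ x ∈ Finset.range (n + 1), N ((j : ℕ) + x) := by
    rw [Finset.sum_range_add]
    rw [Finset.sum_eq_zero fun l hl => by
      simp only [hN]; rw [if_neg (by simp only [Finset.mem_range] at hl; omega)]]
    rw [zero_add]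
  have stepD : ∑ x ∈ Finset.range (n + 1), N ((j : ℕ) + x)
      = ∑ x ∈ Finset.range (n + 1),
          PowerSeries.coeff (R := R n r) x (Dser n r d) * PowerSeries.coeff (R := R n r) (n - x) G := by
    refine Finset.sum_congr rfl fun x hx => ?_
    have hxn : x ≤ n := by simp only [Finset.mem_range] at hx; omega
    simp only [hN]
    rw [if_pos (by omega)]
    have h1 : (j : ℕ) + x - (j : ℕ) = x := by omega
    have h2 : PowerSeries.X ^ (P + ((j : ℕ) + x) + 1) * F = PowerSeries.X ^ x * G := by
      rw [hG, ← mul_assoc, ← pow_add]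
      congr 2
      omega
    rw [h1, h2, PowerSeries.coeff_X_pow_mul', if_pos hxn, mul_comm]
  have stepE : ∑ x ∈ Finset.range (n + 1),
        PowerSeries.coeff (R := R n r) x (Dser n r d) * PowerSeries.coeff (R := R n r) (n - x) G
      = PowerSeries.coeff (R := R n r) n (Dser n r d * G) := by
    rw [PowerSeries.coeff_mul, Finset.Nat.sum_antidiagonal_eq_sum_range_succ_mk]
  have stepF : PowerSeries.coeff (R := R n r) n (Dser n r d * G)
      = PowerSeries.coeff (R := R n r) n ((Aser n r * eB n r) * G) := by
    rw [mul_comm (Dser n r d) G, mul_comm (Aser n r * eB n r) G]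
    exact coeff_mul_congr n G _ _ (coeff_Dser_eq d hd) n le_rfl
  have stepG : (Aser n r * eB n r) * G
      = PowerSeries.X ^ (P + (j : ℕ) + 1) * Aser n r * (eB n r) ^ (s + 2) := by
    rw [hG, hF]
    ring
  rw [stepA, stepB, stepC, stepD, stepE, stepF, stepG]

end Aux6
/-- Lemma 3.5: for `0 ≤ s ≤ q_1-1`,
`(∂ψ_{sr+i}/∂b_{r-1-j}) = -(s+1) · (∂ψ_{sr+i}/∂a_{n-1-j}) · D`. -/
theorem stmt6 (n r q1 r1 : ℕ) (hq1 : 1 ≤ q1) (h1 : 0 < r1) (h2 : r1 < r)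
    (hn : n = q1 * r + r1)
    (d : Fin n → R n r) (hd : dSpec n r d) :
    ∀ s, s ≤ q1 - 1 →
      (Matrix.of fun i j : Fin r =>
          pderiv (Sum.inr (⟨r - 1 - (j : ℕ), by omega⟩ : Fin r))
            (psi n r (by omega) (rle q1 r r1 n (by omega) hn) d (s * r + (i : ℕ))))
        = (-((s : R n r) + 1)) •
          ((Matrix.of fun (i : Fin r) (j : Fin n) =>
              pderiv (Sum.inl (⟨n - 1 - (j : ℕ), by omega⟩ : Fin n))
                (psi n r (by omega) (rle q1 r r1 n (by omega) hn) d (s * r + (i : ℕ))))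
            * Dmat n r (by omega) (rle q1 r r1 n (by omega) hn) d) := by
  intro s hs
  have hr0 : 0 < r := by omega
  have hrn : r ≤ n := rle q1 r r1 n (by omega) hn
  have hn0 : 0 < n := by omega
  refine Matrix.ext fun i j => ?_
  have hjr := j.isLt
  simp only [Matrix.of_apply, Matrix.smul_apply, Matrix.mul_apply, smul_eq_mul]
  simp only [psi_formula hr0 hrn d hd s (i : ℕ) i.isLt]
  simp only [pderiv_intCast_mul, Lb, La]
  have harith1 : s * r + (i : ℕ) + (r - (r - 1 - (j : ℕ))) = s * r + (i : ℕ) + ((j : ℕ) + 1) := by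
    omega
  have harith2 : ∀ l : Fin n,
      s * r + (i : ℕ) + (n - (n - 1 - (l : ℕ))) = s * r + (i : ℕ) + ((l : ℕ) + 1) :=
    fun l => by have := l.isLt; omega
  simp only [harith1, harith2]
  rw [key_sum hn0 hrn d hd s (s * r + (i : ℕ)) j]
  simp only [Finset.mul_sum]
  apply Finset.sum_congr rfl
  intro l hl
  ring

end TB
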